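/- Intuitionistic propositional logic is not an n-valued logic for any finite n: there is no finite-valued truth-table semantics (with designated value) whose tautologies are exactly the intuitionistically valid formulas, provided (p → p) ∨ q is intuitionistically valid (which it is). -/

import Mathlib

inductive Fm (α : Type) : Type where
  | top  : Fm α
  | atom : α → Fm α
  | neg  : Fm α → Fm α
  | and  : Fm α → Fm α → Fm α
  | or   : Fm α → Fm α → Fm α
  | imp  : Fm α → Fm α → Fm α

structure KripkeModel (α : Type) : Type 1 where
  K : Type
  le : K → K → Prop
  refl : ∀ k, le k k
  trans : ∀ {a b c}, le a b → le b c → le a c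
  antisymm : ∀ {a b}, le a b → le b a → a = b
  val : K → α → Prop
  persist : ∀ {k k' p}, le k k' → val k p → val k' p

def force {α : Type} (M : KripkeModel α) : M.K → Fm α → Prop
  | _, .top => True
  | k, .atom p => M.val k p
  | k, .neg φ => ∀ k', M.le k k' → ¬ force M k' φ
  | k, .and φ ψ => force M k φ ∧ force M k ψ
  | k, .or φ ψ => force M k φ ∨ force M k ψ
  | k, .imp φ ψ => ∀ k', M.le k k' → force M k' φ → force M k' ψ

/-- A many-valued truth table: a designated value and operations for the connectives. -/
structure MVLogic (V : Type) where
  tau : V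
  mneg : V → V
  mand : V → V → V
  mor  : V → V → V
  mimp : V → V → V

/-- Homomorphic extension of a valuation of the atoms to all formulas. -/
def MVLogic.eval {V α : Type} (L : MVLogic V) (ν : α → V) : Fm α → V
  | .top => L.tau
  | .atom p => ν p
  | .neg φ => L.mneg (L.eval ν φ)
  | .and φ ψ => L.mand (L.eval ν φ) (L.eval ν ψ)
  | .or φ ψ => L.mor (L.eval ν φ) (L.eval ν ψ)
  | .imp φ ψ => L.mimp (L.eval ν φ) (L.eval ν ψ)

/-- Intuitionistic validity: being forced at every node of every finite Kripke model. -/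
def IValid (φ : Fm ℕ) : Prop :=
  ∀ (M : KripkeModel ℕ), Fintype M.K → ∀ k : M.K, force M k φ

def pairs (n : ℕ) : List (ℕ × ℕ) :=
  (List.range (n+1)).flatMap fun j => (List.range j).map fun i => (i, j)

lemma mem_pairs {n i j : ℕ} (h1 : i < j) (h2 : j ≤ n) : (i, j) ∈ pairs n := by
  simp only [pairs, List.mem_flatMap, List.mem_map, List.mem_range]
  exact ⟨j, by omega, i, h1, rfl⟩

def disj (l : List (Fm ℕ)) : Fm ℕ := l.foldr Fm.or (Fm.atom 0)

lemma force_disj {M : KripkeModel ℕ} {k : M.K} {l : List (Fm ℕ)}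
    (h : force M k (disj l)) : force M k (Fm.atom 0) ∨ ∃ ψ ∈ l, force M k ψ := by
  induction l with
  | nil => exact Or.inl h
  | cons hd t ih =>
    rcases h with h | h
    · exact Or.inr ⟨hd, List.mem_cons_self, h⟩
    · rcases ih h with h | ⟨ψ, hψ, hf⟩
      · exact Or.inl h
      · exact Or.inr ⟨ψ, List.mem_cons_of_mem _ hψ, hf⟩

lemma eval_disj_tau {V : Type} (L : MVLogic V) (ν : ℕ → V) {l : List (Fm ℕ)} {ψ : Fm ℕ}
    (hmem : ψ ∈ l) (h1 : ∀ b, L.mor (L.eval ν ψ) b = L.tau)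
    (h2 : ∀ x, L.mor x L.tau = L.tau) :
    L.eval ν (disj l) = L.tau := by
  induction l with
  | nil => cases hmem
  | cons hd t ih =>
    rcases List.mem_cons.mp hmem with rfl | hmem'
    · exact h1 _
    · have ht := ih hmem'
      simp only [disj] at ht
      show L.mor _ _ = _
      rw [ht, h2]

def Mdl (n : ℕ) : KripkeModel ℕ where
  K := Option (Fin (n+1))
  le a b := a = b ∨ a = none
  refl _ := Or.inl rfl
  trans := by rintro a b c (rfl | rfl) (rfl | rfl) <;> simp
  antisymm := by rintro a b (rfl | rfl) (h | h) <;> simp_all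
  val k p := ∃ j : Fin (n+1), k = some j ∧ p ≠ (j : ℕ)
  persist := by
    rintro k k' p (rfl | rfl) h
    · exact h
    · obtain ⟨j, hj, _⟩ := h; cases hj

/-- Gödel (1932): intuitionistic propositional logic is not finitely many valued:
there is no finite truth-table semantics whose tautologies are exactly the
intuitionistically valid formulas. -/
theorem IPL_not_finitely_valued :
    ¬ ∃ (V : Type) (_ : Fintype V) (L : MVLogic V),
        ∀ φ : Fm ℕ, IValid φ ↔ (∀ ν : ℕ → V, L.eval ν φ = L.tau) := by
  rintro ⟨V, fV, L, h⟩
  haveI := fV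
  set n := Fintype.card V with hn
  -- (p → p) ∨ q is intuitionistically valid
  have hv1 : IValid (Fm.or (Fm.imp (Fm.atom 0) (Fm.atom 0)) (Fm.atom 1)) := by
    intro M _ k
    exact Or.inl (fun k' _ hp => hp)
  have hv2 : IValid (Fm.or (Fm.atom 1)
      (Fm.or (Fm.imp (Fm.atom 0) (Fm.atom 0)) (Fm.atom 2))) := by
    intro M _ k
    exact Or.inr (Or.inl (fun k' _ hp => hp))
  have h1 : ∀ a b : V, L.mor (L.mimp a a) b = L.tau := by
    intro a b
    have := (h _).mp hv1 (fun m => if m = 0 then a else b)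
    simpa [MVLogic.eval] using this
  have h2 : ∀ x : V, L.mor x L.tau = L.tau := by
    intro x
    have := (h _).mp hv2 (fun _ => x)
    simp only [MVLogic.eval] at this
    rwa [h1] at this
  -- the big disjunction
  set l : List (Fm ℕ) := (pairs n).map (fun pr => Fm.imp (Fm.atom pr.1) (Fm.atom pr.2)) with hl
  have hT : ∀ ν : ℕ → V, L.eval ν (disj l) = L.tau := by
    intro ν
    obtain ⟨a, b, hab, heq⟩ := Fintype.exists_ne_map_eq_of_card_lt
      (fun i : Fin (n+1) => ν i) (by simp [hn])
    have hab' : (a : ℕ) ≠ b := fun hc => hab (Fin.ext hc)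
    rcases Nat.lt_or_ge (a : ℕ) (b : ℕ) with hlt | hge
    · refine eval_disj_tau L ν (l := l) (ψ := Fm.imp (Fm.atom a) (Fm.atom b)) ?_ ?_ h2
      · exact List.mem_map.mpr ⟨(a, b), mem_pairs hlt (by omega), rfl⟩
      · intro c; show L.mor (L.mimp (ν a) (ν b)) c = L.tau
        rw [heq]; exact h1 _ _
    · have hlt : (b : ℕ) < a := by omega
      refine eval_disj_tau L ν (l := l) (ψ := Fm.imp (Fm.atom b) (Fm.atom a)) ?_ ?_ h2
      · exact List.mem_map.mpr ⟨(b, a), mem_pairs hlt (by omega), rfl⟩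
      · intro c; show L.mor (L.mimp (ν b) (ν a)) c = L.tau
        rw [heq]; exact h1 _ _
  have hIV : IValid (disj l) := (h _).mpr hT
  have hforce := hIV (Mdl n) (inferInstanceAs (Fintype (Option (Fin (n+1))))) none
  rcases force_disj hforce with hbase | ⟨ψ, hψ, hf⟩
  · obtain ⟨j, hj, _⟩ := hbase; cases hj
  · rw [hl] at hψ
    obtain ⟨⟨i, j⟩, hpr, rfl⟩ := List.mem_map.mp hψ
    simp only [pairs, List.mem_flatMap, List.mem_map, List.mem_range] at hpr
    obtain ⟨a, ha, b, hb, hab⟩ := hpr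
    obtain ⟨rfl, rfl⟩ := hab
    have := hf (some ⟨j, ha⟩) (Or.inr rfl) ⟨⟨j, ha⟩, rfl, Nat.ne_of_lt hb⟩
    obtain ⟨j', hj', hne⟩ := this
    exact hne (by cases hj'; rfl)
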